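/- Let k₀ be a field, let k be an extension field of k₀, and let Γ be a group. Let 0 → N → P → M → 0 be a short exact sequence of modules over the group algebra k₀[Γ], where M is finitely generated as a left k₀[Γ]-module. If the base-changed sequence 0 → k ⊗_{k₀} N → k ⊗_{k₀} P → k ⊗_{k₀} M → 0 of k[Γ]-modules is split, then the original sequence of k₀[Γ]-modules is split. (This is the content of the injectivity of the canonical homomorphism k ⊗_{k₀} Ext¹_{k₀[Γ]}(M, N) → Ext¹_{k[Γ]}(k ⊗_{k₀} M, k ⊗_{k₀} N) for M finitely generated.) -/
import Mathlib


open TensorProduct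

/-- Base change of a representation along a ring extension `k₀ → k`,
i.e. the representation of `Γ` on `k ⊗[k₀] V`, with `Γ` acting through the second factor. -/
noncomputable def Representation.tensorUp
    (k₀ k : Type) [CommRing k₀] [CommRing k] [Algebra k₀ k]
    {Γ : Type} [Monoid Γ] {V : Type} [AddCommGroup V] [Module k₀ V]
    (ρ : Representation k₀ Γ V) : Representation k Γ (k ⊗[k₀] V) :=
  (Module.End.baseChangeHom k₀ k V).toRingHom.toMonoidHom.comp ρ

theorem tensorUp_apply
    (k₀ k : Type) [CommRing k₀] [CommRing k] [Algebra k₀ k]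
    {Γ : Type} [Monoid Γ] {V : Type} [AddCommGroup V] [Module k₀ V]
    (ρ : Representation k₀ Γ V) (γ : Γ) :
    (ρ.tensorUp k₀ k) γ = (ρ γ).baseChange k := rfl

/-- let `0 → N → P → M → 0` be a short exact sequence of `k₀[Γ]`-modules
(here: representations of `Γ` with equivariant maps), with `M` finitely generated as a
`k₀[Γ]`-module.  If the base-changed sequence of `k[Γ]`-modules is split, then the original
sequence is split. -/
theorem statement_4 (k₀ : Type) [Field k₀] (k : Type) [Field k] [Algebra k₀ k]
    (Γ : Type) [Group Γ]
    (N P M : Type) [AddCommGroup N] [Module k₀ N] [AddCommGroup P] [Module k₀ P]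
    [AddCommGroup M] [Module k₀ M]
    (ρN : Representation k₀ Γ N) (ρP : Representation k₀ Γ P) (ρM : Representation k₀ Γ M)
    (i : N →ₗ[k₀] P) (p : P →ₗ[k₀] M)
    (hi : ∀ (γ : Γ) (x : N), i (ρN γ x) = ρP γ (i x))
    (hp : ∀ (γ : Γ) (x : P), p (ρP γ x) = ρM γ (p x))
    (hinj : Function.Injective i) (hsurj : Function.Surjective p)
    (hexact : LinearMap.range i = LinearMap.ker p)
    (hfg : Module.Finite (MonoidAlgebra k₀ Γ) ρM.asModule)
    (hsplit : ∃ s : (k ⊗[k₀] M) →ₗ[k] (k ⊗[k₀] P),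
      (∀ (γ : Γ) (x : k ⊗[k₀] M), s ((ρM.tensorUp k₀ k) γ x) = (ρP.tensorUp k₀ k) γ (s x)) ∧
      (p.baseChange k) ∘ₗ s = LinearMap.id) :
    ∃ s₀ : M →ₗ[k₀] P,
      (∀ (γ : Γ) (x : M), s₀ (ρM γ x) = ρP γ (s₀ x)) ∧ p ∘ₗ s₀ = LinearMap.id := by
  obtain ⟨s, hs_eq, hs_split⟩ := hsplit
  -- a k₀-linear functional ℓ : k → k₀ with ℓ 1 = 1
  obtain ⟨ℓ, hℓ⟩ := (Algebra.linearMap k₀ k).exists_leftInverse_of_injective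
    (by rw [LinearMap.ker_eq_bot]; exact (algebraMap k₀ k).injective)
  have hℓ1 : ℓ 1 = 1 := by
    have := congrArg (fun f : k₀ →ₗ[k₀] k₀ => f 1) hℓ
    simpa using this
  -- contraction maps k ⊗ V → V, c ⊗ v ↦ ℓ c • v
  let cP : (k ⊗[k₀] P) →ₗ[k₀] P := (TensorProduct.lid k₀ P).toLinearMap ∘ₗ ℓ.rTensor P
  let cM : (k ⊗[k₀] M) →ₗ[k₀] M := (TensorProduct.lid k₀ M).toLinearMap ∘ₗ ℓ.rTensor M
  have cP_tmul : ∀ (c : k) (y : P), cP (c ⊗ₜ[k₀] y) = ℓ c • y := fun c y => by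
    simp [cP]
  have cM_tmul : ∀ (c : k) (y : M), cM (c ⊗ₜ[k₀] y) = ℓ c • y := fun c y => by
    simp [cM]
  refine ⟨cP ∘ₗ (s.restrictScalars k₀) ∘ₗ (TensorProduct.mk k₀ k M 1), ?_, ?_⟩
  · intro γ x
    have h1 : (1 : k) ⊗ₜ[k₀] (ρM γ x) = (ρM.tensorUp k₀ k) γ ((1 : k) ⊗ₜ[k₀] x) := by
      rw [tensorUp_apply]; simp
    have h2 : ∀ z : k ⊗[k₀] P, cP ((ρP.tensorUp k₀ k) γ z) = ρP γ (cP z) := by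
      intro z
      rw [tensorUp_apply]
      induction z using TensorProduct.induction_on with
      | zero => simp
      | tmul c y => simp [cP_tmul]
      | add a b ha hb => simp [map_add, ha, hb]
    simp only [LinearMap.comp_apply, LinearMap.restrictScalars_apply,
      TensorProduct.mk_apply]
    rw [h1, hs_eq, h2]
  · apply LinearMap.ext
    intro x
    have h3 : ∀ z : k ⊗[k₀] P, p (cP z) = cM ((p.baseChange k) z) := by
      intro z
      induction z using TensorProduct.induction_on with
      | zero => simp
      | tmul c y => simp [cP_tmul, cM_tmul]
      | add a b ha hb => simp [map_add, ha, hb]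
    have h4 : (p.baseChange k) (s ((1 : k) ⊗ₜ[k₀] x)) = (1 : k) ⊗ₜ[k₀] x := by
      have := congrArg (fun f : (k ⊗[k₀] M) →ₗ[k] (k ⊗[k₀] M) => f ((1 : k) ⊗ₜ[k₀] x)) hs_split
      simpa using this
    simp only [LinearMap.comp_apply, LinearMap.restrictScalars_apply,
      TensorProduct.mk_apply, LinearMap.id_apply]
    rw [h3, h4, cM_tmul, hℓ1, one_smul]
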